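/- For every c ∈ (0,1) there is d₀ such that for all d ≥ d₀ the following holds: assuming there exist m = 2^{cd} points of common norm R ≤ (1/c₁)·√(d / log(m/d)) (c₁ > 0 an absolute constant) whose convex hull contains the unit ball of R^d, the resulting polytope-based unbiased compressor C : S^{d−1} → R^d with b = cd bits and variance ω = R² − 1 satisfies (ω/(ω+1)) · 4^{b/d} ≤ (1 − c₁²(c − (log₂ d)/d)) · 4^c. In particular, as c → 0 and d → ∞ this quantity can be made arbitrarily close to 1, so the uncertainty principle lower bound is asymptotically tight. -/

import Mathlib

/-- asymptotic tightness of the uncertainty principle.  For every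
`c ∈ (0,1)` and absolute constant `c₁ > 0` there is `d₀` such that for all `d ≥ d₀`:
if there is a polytope with `m = 2^{cd}` vertices of common norm
`R ≤ (1/c₁)·√(d / log₂(m/d))` (so `log₂(m/d) = cd - log₂ d`) whose convex hull contains the
unit ball, then the resulting polytope compressor with `b = cd` bits and variance
`ω = R² - 1` satisfies `(ω/(ω+1))·4^{b/d} ≤ (1 - c₁²(c - (log₂ d)/d))·4^c`. -/
theorem stmt15 :
    ∀ c ∈ Set.Ioo (0 : ℝ) 1, ∀ c₁ : ℝ, 0 < c₁ → ∃ d₀ : ℕ, ∀ d : ℕ, d₀ ≤ d →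
      ∀ R : ℝ, 1 < R →
        R ≤ (1 / c₁) * Real.sqrt ((d : ℝ) / (c * d - Real.logb 2 d)) →
        ∀ ω b : ℝ, ω = R ^ 2 - 1 → b = c * d →
          ω / (ω + 1) * 4 ^ (b / d) ≤
            (1 - c₁ ^ 2 * (c - Real.logb 2 d / d)) * 4 ^ c := by
  intro c hc c₁ hc₁
  obtain ⟨hc0, hc1⟩ := hc
  have hlog2 : (0:ℝ) < Real.log 2 := Real.log_pos one_lt_two
  set K : ℝ := 2 / (c * Real.log 2) with hK
  have hKpos : 0 < K := by positivity
  refine ⟨⌈K ^ 2⌉₊ + 1, ?_⟩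
  intro d hd R hR1 hRle ω b hω hb
  have hdK : K ^ 2 < (d : ℝ) := by
    have h1 : K ^ 2 ≤ (⌈K ^ 2⌉₊ : ℝ) := Nat.le_ceil _
    have h2 : (⌈K ^ 2⌉₊ : ℝ) + 1 ≤ (d : ℝ) := by exact_mod_cast hd
    linarith
  have hdpos : (0:ℝ) < d := lt_of_le_of_lt (by positivity) hdK
  have hd1 : (1:ℝ) ≤ d := by
    have : (1:ℕ) ≤ d := by omega
    exact_mod_cast this
  -- sqrt d > K
  have hsqrt : K < Real.sqrt d := by
    have := Real.sqrt_lt_sqrt (by positivity) hdK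
    rwa [Real.sqrt_sq hKpos.le] at this
  have hsd : 0 < Real.sqrt d := lt_trans hKpos hsqrt
  -- log d ≤ 2 * sqrt d
  have hlogd : Real.log d ≤ 2 * Real.sqrt d := by
    have h1 : Real.log d = 2 * Real.log (Real.sqrt d) := by
      rw [← Real.sq_sqrt hdpos.le, Real.log_pow]
      push_cast
      rw [Real.sq_sqrt hdpos.le]
    have h2 : Real.log (Real.sqrt d) ≤ Real.sqrt d - 1 :=
      Real.log_le_sub_one_of_pos hsd
    nlinarith
  -- logb 2 d < c * d
  have hL : Real.logb 2 d < c * d := by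
    have h2 : 2 * Real.sqrt d < c * Real.log 2 * d := by
      have h3 : 2 < c * Real.log 2 * Real.sqrt d := by
        have := (div_lt_iff₀ (by positivity)).mp hsqrt
        -- K = 2/(c log 2) < sqrt d → 2 < c log 2 * sqrt d
        rw [hK, div_lt_iff₀ (by positivity)] at hsqrt
        nlinarith
      have h4 : Real.sqrt d * Real.sqrt d = d := Real.mul_self_sqrt hdpos.le
      nlinarith
    rw [Real.logb, div_lt_iff₀ hlog2]
    nlinarith
  set L := Real.logb 2 d with hLdef
  have hcdL : 0 < c * d - L := sub_pos.mpr hL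
  have hR0 : (0:ℝ) < R := lt_trans zero_lt_one hR1
  -- square the bound on R
  have hargnn : (0:ℝ) ≤ (d : ℝ) / (c * d - L) := by positivity
  have hRsq : R ^ 2 ≤ (1 / c₁) ^ 2 * ((d : ℝ) / (c * d - L)) := by
    have := mul_self_le_mul_self hR0.le hRle
    calc R ^ 2 = R * R := sq R
    _ ≤ ((1 / c₁) * Real.sqrt ((d : ℝ) / (c * d - L))) *
          ((1 / c₁) * Real.sqrt ((d : ℝ) / (c * d - L))) := this
    _ = (1 / c₁) ^ 2 * ((d : ℝ) / (c * d - L)) := by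
        rw [mul_mul_mul_comm, Real.mul_self_sqrt hargnn]; ring
  -- A ≤ 1/R² where A = c₁²(c - L/d)
  have hA : c₁ ^ 2 * (c - L / d) ≤ 1 / R ^ 2 := by
    have hAeq : c₁ ^ 2 * (c - L / d) = c₁ ^ 2 * (c * d - L) / d := by
      field_simp
    rw [hAeq, div_le_div_iff₀ hdpos (by positivity)]
    have h5 : R ^ 2 * (c₁ ^ 2 * (c * d - L)) ≤
        ((1 / c₁) ^ 2 * ((d : ℝ) / (c * d - L))) * (c₁ ^ 2 * (c * d - L)) := by
      apply mul_le_mul_of_nonneg_right hRsq (by positivity)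
    calc c₁ ^ 2 * (c * d - L) * R ^ 2
        = R ^ 2 * (c₁ ^ 2 * (c * d - L)) := by ring
      _ ≤ ((1 / c₁) ^ 2 * ((d : ℝ) / (c * d - L))) * (c₁ ^ 2 * (c * d - L)) := h5
      _ = d := by field_simp; exact div_self (ne_of_gt (by linarith))
      _ = 1 * d := (one_mul _).symm
  -- ω/(ω+1) = 1 - 1/R²
  have hRsqpos : (0:ℝ) < R ^ 2 := by positivity
  have hfrac : ω / (ω + 1) = 1 - 1 / R ^ 2 := by
    rw [hω]
    have : R ^ 2 - 1 + 1 = R ^ 2 := by ring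
    rw [this]
    field_simp
  have hbd : b / d = c := by
    rw [hb, mul_div_assoc, div_self hdpos.ne', mul_one]
  rw [hfrac, hbd]
  have h4c : (0:ℝ) ≤ (4:ℝ) ^ c := Real.rpow_nonneg (by norm_num) c
  apply mul_le_mul_of_nonneg_right _ h4c
  linarith
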